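/- Let C be an n×n positive definite matrix and let R, S be positive definite commuting matrices with R + S = I. With P = RCR and Q = SCS, the spectral geometric mean satisfies P ♮ Q = (RS)^{1/2} C (RS)^{1/2}, and hence Tr(P ♮ Q) = Tr(RSC). -/

import Mathlib

open Matrix ComplexOrder

namespace Heron

variable {n : ℕ}

def WeakMaj {n : ℕ} (x y : Fin n → ℝ) : Prop :=
  ∀ s : Finset (Fin n), ∃ t : Finset (Fin n),
    t.card = s.card ∧ ∑ i ∈ s, x i ≤ ∑ i ∈ t, y i

def Maj {n : ℕ} (x y : Fin n → ℝ) : Prop :=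
  WeakMaj x y ∧ ∑ i, x i = ∑ i, y i

lemma sandwich_posSemidef {S T : Matrix (Fin n) (Fin n) ℂ} (hS : S.IsHermitian)
    (hT : T.PosSemidef) : (S * T * S).PosSemidef := by
  have h := hT.mul_mul_conjTranspose_same S
  rwa [hS.eq] at h

/-- The positive semidefinite square root of a positive semidefinite matrix
(the definition Mathlib had in December 2024). -/
noncomputable def _root_.Matrix.PosSemidef.sqrt {m : Type*} [Fintype m] [DecidableEq m]
    {𝕜 : Type*} [RCLike 𝕜] {A : Matrix m m 𝕜} (hA : A.PosSemidef) : Matrix m m 𝕜 :=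
  hA.1.eigenvectorUnitary.1 * diagonal ((↑) ∘ (√·) ∘ hA.1.eigenvalues) *
  (star hA.1.eigenvectorUnitary : Matrix m m 𝕜)

lemma _root_.Matrix.PosSemidef.posSemidef_sqrt {m : Type*} [Fintype m] [DecidableEq m]
    {𝕜 : Type*} [RCLike 𝕜] {A : Matrix m m 𝕜} (hA : A.PosSemidef) : hA.sqrt.PosSemidef := by
  apply PosSemidef.mul_mul_conjTranspose_same
  refine posSemidef_diagonal_iff.mpr fun i ↦ ?_
  rw [Function.comp_apply, RCLike.nonneg_iff]
  constructor
  · simp only [RCLike.ofReal_re]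
    exact Real.sqrt_nonneg _
  · simp only [RCLike.ofReal_im]

section SqrtAux
open scoped MatrixOrder

lemma _root_.Matrix.PosSemidef.sqrt_eq_cfcSqrt {A : Matrix (Fin n) (Fin n) ℂ} (hA : A.PosSemidef) :
    hA.sqrt = CFC.sqrt A := by
  rw [CFC.sqrt_eq_cfc, cfc_nnreal_eq_real _ A, hA.1.cfc_eq]
  simp only [IsHermitian.cfc, Unitary.conjStarAlgAut_apply, Matrix.PosSemidef.sqrt]
  congr 3
  funext i
  simp [Real.coe_toNNReal', max_eq_left (hA.eigenvalues_nonneg i)]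

lemma _root_.Matrix.PosSemidef.sqrt_mul_self {A : Matrix (Fin n) (Fin n) ℂ} (hA : A.PosSemidef) :
    hA.sqrt * hA.sqrt = A := by
  rw [hA.sqrt_eq_cfcSqrt]
  exact CFC.sqrt_mul_sqrt_self A hA.nonneg

lemma _root_.Matrix.PosSemidef.eq_sqrt_of_sq_eq {A : Matrix (Fin n) (Fin n) ℂ} (hA : A.PosSemidef)
    (B : Matrix (Fin n) (Fin n) ℂ) (hAB : A ^ 2 = B) {hB : B.PosSemidef} : A = hB.sqrt := by
  rw [hB.sqrt_eq_cfcSqrt, ← hAB, CFC.sqrt_sq A hA.nonneg]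

end SqrtAux

noncomputable def geomMean {A B : Matrix (Fin n) (Fin n) ℂ}
    (hA : A.PosDef) (hB : B.PosDef) : Matrix (Fin n) (Fin n) ℂ :=
  hA.posSemidef.sqrt *
    (sandwich_posSemidef hA.posSemidef.posSemidef_sqrt.isHermitian.inv
        hB.posSemidef).sqrt *
    hA.posSemidef.sqrt

lemma geomMean_posSemidef {A B : Matrix (Fin n) (Fin n) ℂ}
    (hA : A.PosDef) (hB : B.PosDef) : (geomMean hA hB).PosSemidef :=
  sandwich_posSemidef hA.posSemidef.posSemidef_sqrt.isHermitian
    (Matrix.PosSemidef.posSemidef_sqrt _)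

noncomputable def specMean {A B : Matrix (Fin n) (Fin n) ℂ}
    (hA : A.PosDef) (hB : B.PosDef) : Matrix (Fin n) (Fin n) ℂ :=
  (geomMean_posSemidef hA.inv hB).sqrt * A * (geomMean_posSemidef hA.inv hB).sqrt

def HasPosSpectrum (M : Matrix (Fin n) (Fin n) ℂ) : Prop :=
  ∀ z ∈ spectrum ℂ M, 0 < z.re ∧ z.im = 0

def IsPrincipalSqrt (M S : Matrix (Fin n) (Fin n) ℂ) : Prop :=
  S * S = M ∧ HasPosSpectrum S

noncomputable def absMat (Y : Matrix (Fin n) (Fin n) ℂ) : Matrix (Fin n) (Fin n) ℂ :=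
  (Matrix.posSemidef_conjTranspose_mul_self Y).sqrt

noncomputable def posPart (H : Matrix (Fin n) (Fin n) ℂ) : Matrix (Fin n) (Fin n) ℂ :=
  ((1 : ℂ) / 2) • (absMat H + H)

lemma commute_sqrt {A B : Matrix (Fin n) (Fin n) ℂ} (hA : A.PosSemidef)
    (h : A * B = B * A) : hA.sqrt * B = B * hA.sqrt := by
  set U : Matrix (Fin n) (Fin n) ℂ := (hA.1.eigenvectorUnitary : Matrix (Fin n) (Fin n) ℂ)
  have hU1 : star U * U = 1 := Matrix.mem_unitaryGroup_iff'.mp hA.1.eigenvectorUnitary.2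
  have hU2 : U * star U = 1 := Matrix.mem_unitaryGroup_iff.mp hA.1.eigenvectorUnitary.2
  have cancel1 : ∀ X : Matrix (Fin n) (Fin n) ℂ, star U * (U * X) = X := fun X => by
    rw [← mul_assoc, hU1, one_mul]
  have cancel2 : ∀ X : Matrix (Fin n) (Fin n) ℂ, U * (star U * X) = X := fun X => by
    rw [← mul_assoc, hU2, one_mul]
  set d : Fin n → ℂ := RCLike.ofReal ∘ hA.1.eigenvalues with hd_def
  set e : Fin n → ℂ := (↑) ∘ Real.sqrt ∘ hA.1.eigenvalues with he_def
  set M : Matrix (Fin n) (Fin n) ℂ := star U * B * U with hM_def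
  have hsqrt : hA.sqrt = U * diagonal e * star U := rfl
  have key : U * diagonal d * star U * B = B * (U * diagonal d * star U) := by
    have hsp := hA.1.spectral_theorem
    rw [Unitary.conjStarAlgAut_apply] at hsp
    rw [← hsp]; exact h
  have hM : diagonal d * M = M * diagonal d := by
    have := congrArg (fun X => star U * X * U) key
    simp only [mul_assoc, cancel1, cancel2, hU1, hU2, mul_one] at this
    simpa only [hM_def, mul_assoc] using this
  have entry : ∀ i j, d i * M i j = d j * M i j := fun i j => by
    have h2 : (diagonal d * M) i j = (M * diagonal d) i j := by rw [hM]
    rw [Matrix.diagonal_mul, Matrix.mul_diagonal] at h2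
    rw [h2, mul_comm]
  have hE : diagonal e * M = M * diagonal e := by
    ext i j
    rw [Matrix.diagonal_mul, Matrix.mul_diagonal]
    rcases eq_or_ne (M i j) 0 with h0 | h0
    · simp [h0]
    · have hdij : d i = d j := mul_right_cancel₀ h0 (entry i j)
      have hev : hA.1.eigenvalues i = hA.1.eigenvalues j := by
        simpa [hd_def, Complex.ofReal_inj] using hdij
      have : e i = e j := by simp [he_def, hev]
      rw [this, mul_comm]
  have final := congrArg (fun X => U * X * star U) hE
  simp only [hM_def, mul_assoc, cancel1, cancel2, hU1, hU2, mul_one] at final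
  rw [hsqrt]
  simp only [mul_assoc]
  exact final

/-- for commuting `R, S > 0` with `R + S = I` and `P = RCR`,
`Q = SCS`, one has `P ♮ Q = (RS)^{1/2} C (RS)^{1/2}` and
`Tr(P ♮ Q) = Tr(RSC)`. -/
theorem spectral_mean_of_pinched {n : ℕ} (C R S : Matrix (Fin n) (Fin n) ℂ)
    (hC : C.PosDef) (hR : R.PosDef) (hS : S.PosDef)
    (hcomm : R * S = S * R) (hsum : R + S = 1)
    (hP : (R * C * R).PosDef) (hQ : (S * C * S).PosDef)
    (hRS : (R * S).PosSemidef) :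
    specMean hP hQ = hRS.sqrt * C * hRS.sqrt ∧
      (specMean hP hQ).trace = (R * S * C).trace := by
  classical
  set T := hRS.sqrt with hTdef
  -- invertibility facts
  have hRdet : IsUnit R.det := (Matrix.isUnit_iff_isUnit_det R).mp hR.isUnit
  have hRi : R * R⁻¹ = 1 := Matrix.mul_nonsing_inv R hRdet
  have hiR : R⁻¹ * R = 1 := Matrix.nonsing_inv_mul R hRdet
  have hPdet : IsUnit (R * C * R).det := (Matrix.isUnit_iff_isUnit_det _).mp hP.isUnit
  have hPinv : (R * C * R)⁻¹ * (R * C * R) = 1 := Matrix.nonsing_inv_mul _ hPdet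
  -- cancellation helpers
  have cRiR : ∀ X : Matrix (Fin n) (Fin n) ℂ, R⁻¹ * (R * X) = X := fun X => by
    rw [← mul_assoc, hiR, one_mul]
  have cRRi : ∀ X : Matrix (Fin n) (Fin n) ℂ, R * (R⁻¹ * X) = X := fun X => by
    rw [← mul_assoc, hRi, one_mul]
  have hRS' : ∀ X : Matrix (Fin n) (Fin n) ℂ, R * (S * X) = S * (R * X) := fun X => by
    rw [← mul_assoc, hcomm, mul_assoc]
  -- S commutes with R⁻¹
  have hSRi : S * R⁻¹ = R⁻¹ * S := by
    calc S * R⁻¹ = R⁻¹ * (R * (S * R⁻¹)) := (cRiR _).symm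
      _ = R⁻¹ * (S * (R * R⁻¹)) := by rw [hRS']
      _ = R⁻¹ * S := by rw [hRi, mul_one]
  -- X := S * R⁻¹ is positive semidefinite
  have hXpsd : (S * R⁻¹).PosSemidef := by
    set V := hS.posSemidef.sqrt with hVdef
    have hV2 : V * V = S := hS.posSemidef.sqrt_mul_self
    have hVc : V * R⁻¹ = R⁻¹ * V := commute_sqrt hS.posSemidef hSRi
    have hX1 : V * R⁻¹ * V = S * R⁻¹ := by
      calc V * R⁻¹ * V = V * (V * R⁻¹) := by rw [mul_assoc, ← hVc]
        _ = S * R⁻¹ := by rw [← mul_assoc, hV2]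
    rw [← hX1]
    exact sandwich_posSemidef hS.posSemidef.posSemidef_sqrt.isHermitian hR.inv.posSemidef
  -- W := sqrt of P⁻¹
  set W := (hP.inv).posSemidef.sqrt with hWdef
  have hW2 : W * W = (R * C * R)⁻¹ := (hP.inv).posSemidef.sqrt_mul_self
  have hWdet : IsUnit W.det := by
    apply Matrix.isUnit_det_of_right_inverse (B := W * (R * C * R))
    rw [← mul_assoc, hW2, hPinv]
  have hWi : W * W⁻¹ = 1 := Matrix.mul_nonsing_inv W hWdet
  have hiW : W⁻¹ * W = 1 := Matrix.nonsing_inv_mul W hWdet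
  have hWinv2 : W⁻¹ * W⁻¹ = R * C * R := by
    rw [← Matrix.mul_inv_rev, hW2, Matrix.nonsing_inv_nonsing_inv _ hPdet]
  -- the Riccati computation: X * P * X = Q
  have hXPX : (S * R⁻¹) * (R * C * R) * (S * R⁻¹) = S * C * S := by
    simp only [mul_assoc]
    rw [cRiR, hRS', hRi, mul_one]
  -- the inner square root
  have h1 : (W⁻¹ * (S * R⁻¹) * W⁻¹).PosSemidef :=
    sandwich_posSemidef (hP.inv).posSemidef.posSemidef_sqrt.isHermitian.inv hXpsd
  have hsq : (W⁻¹ * (S * R⁻¹) * W⁻¹) ^ 2 = W⁻¹ * (S * C * S) * W⁻¹ := by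
    rw [pow_two]
    calc (W⁻¹ * (S * R⁻¹) * W⁻¹) * (W⁻¹ * (S * R⁻¹) * W⁻¹)
        = W⁻¹ * ((S * R⁻¹) * (W⁻¹ * W⁻¹) * (S * R⁻¹)) * W⁻¹ := by simp only [mul_assoc]
      _ = W⁻¹ * ((S * R⁻¹) * (R * C * R) * (S * R⁻¹)) * W⁻¹ := by rw [hWinv2]
      _ = W⁻¹ * (S * C * S) * W⁻¹ := by rw [hXPX]
  have hinner :
      (sandwich_posSemidef (hP.inv).posSemidef.posSemidef_sqrt.isHermitian.inv
        hQ.posSemidef).sqrt = W⁻¹ * (S * R⁻¹) * W⁻¹ :=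
    (h1.eq_sqrt_of_sq_eq _ hsq).symm
  -- the geometric mean equals S * R⁻¹
  have hGM : geomMean hP.inv hQ = S * R⁻¹ := by
    unfold geomMean
    rw [hinner]
    calc W * (W⁻¹ * (S * R⁻¹) * W⁻¹) * W
        = W * W⁻¹ * (S * (R⁻¹ * (W⁻¹ * W))) := by simp only [mul_assoc]
      _ = S * R⁻¹ := by rw [hWi, hiW, one_mul, mul_one]
  -- T commutes with R and R⁻¹
  have hTR : T * R = R * T := by
    apply commute_sqrt hRS
    rw [mul_assoc, ← hcomm]
  have hT2 : T * T = R * S := hRS.sqrt_mul_self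
  have hTRi : T * R⁻¹ = R⁻¹ * T := by
    calc T * R⁻¹ = R⁻¹ * (R * (T * R⁻¹)) := (cRiR _).symm
      _ = R⁻¹ * (T * (R * R⁻¹)) := by rw [← mul_assoc R T, ← hTR, mul_assoc]
      _ = R⁻¹ * T := by rw [hRi, mul_one]
  have hRT' : ∀ X : Matrix (Fin n) (Fin n) ℂ, R * (T * X) = T * (R * X) := fun X => by
    rw [← mul_assoc, ← hTR, mul_assoc]
  -- Y := T * R⁻¹ is PSD and squares to geomMean
  have hYpsd : (T * R⁻¹).PosSemidef := by
    set V' := hR.inv.posSemidef.sqrt with hV'def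
    have hV'2 : V' * V' = R⁻¹ := hR.inv.posSemidef.sqrt_mul_self
    have hV'T : V' * T = T * V' := commute_sqrt hR.inv.posSemidef hTRi.symm
    have : V' * T * V' = T * R⁻¹ := by rw [hV'T, mul_assoc, hV'2]
    rw [← this]
    exact sandwich_posSemidef hR.inv.posSemidef.posSemidef_sqrt.isHermitian
      hRS.posSemidef_sqrt
  have hYsq : (T * R⁻¹) ^ 2 = geomMean hP.inv hQ := by
    rw [hGM, pow_two]
    calc T * R⁻¹ * (T * R⁻¹) = T * (R⁻¹ * T) * R⁻¹ := by simp only [mul_assoc]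
      _ = T * (T * R⁻¹) * R⁻¹ := by rw [← hTRi]
      _ = R * S * (R⁻¹ * R⁻¹) := by rw [← mul_assoc, ← mul_assoc, hT2, mul_assoc, mul_assoc]
      _ = S * R⁻¹ := by
          rw [mul_assoc, hRS', cRRi]
  have houter : (geomMean_posSemidef hP.inv hQ).sqrt = T * R⁻¹ :=
    (hYpsd.eq_sqrt_of_sq_eq _ hYsq).symm
  -- main computation
  have hmain : specMean hP hQ = T * C * T := by
    unfold specMean
    rw [houter]
    simp only [mul_assoc]
    rw [cRiR, hRT', hRi, mul_one]
  refine ⟨hmain, ?_⟩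
  rw [hmain, Matrix.trace_mul_comm, ← mul_assoc, hT2]


end Heron
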